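/- arXiv:1308.4244 — 5 statements merged into one kernel-verified Lean document; each statement's English description precedes it below -/
import Mathlib

section
/- Let R be an associative ring in which 2 is invertible, and let d_0, d_1, ..., d_n be elements of R satisfying, for every m with 0 ≤ m ≤ n, the relation ∑_{i=0}^{m} (d_i d_{m-i} + d_{m-i} d_i) = 0. Then ∑_{i=1}^{n} (d_0 · (d_i d_{n+1-i} + d_{n+1-i} d_i) − (d_i d_{n+1-i} + d_{n+1-i} d_i) · d_0) = 0. -/
open Finset

/-- **Graded Lie identity** (Lemma on graded Lie commutators, first identity).
In a ring `R` with `2` invertible, if `d₀, …, dₙ` satisfy the supercommutator relations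
`∑_{i=0}^m [dᵢ, d_{m-i}] = 0` for all `m ≤ n` (where `[a,b] = ab + ba` for odd elements),
then `∑_{i=1}^n [d₀, [dᵢ, d_{n+1-i}]] = 0`, where the outer bracket is the ordinary
commutator of `d₀` with an even element. -/
theorem stmt_0 {R : Type*} [Ring R] [Invertible (2 : R)] (n : ℕ) (d : ℕ → R)
    (h : ∀ m ≤ n, ∑ i ∈ Finset.range (m + 1), (d i * d (m - i) + d (m - i) * d i) = 0) :
    ∑ i ∈ Finset.Icc 1 n,
      (d 0 * (d i * d (n + 1 - i) + d (n + 1 - i) * d i)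
        - (d i * d (n + 1 - i) + d (n + 1 - i) * d i) * d 0) = 0 := by
  -- reflected sum equals the original sum
  have hrev : ∀ k : ℕ, ∑ i ∈ range (k+1), d (k-i) * d i
      = ∑ i ∈ range (k+1), d i * d (k-i) := by
    intro k
    rw [← Finset.sum_range_reflect (fun i => d i * d (k - i)) (k+1)]
    apply Finset.sum_congr rfl
    intro j hj
    simp only [Finset.mem_range] at hj
    have h1 : k + 1 - 1 - j = k - j := by omega
    have h2 : k - (k - j) = j := by omega
    simp only [h1, h2]
  -- convolution sums vanish up to degree n
  have hX : ∀ k ≤ n, ∑ i ∈ range (k+1), d i * d (k-i) = 0 := by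
    intro k hk
    have h0 := h k hk
    rw [Finset.sum_add_distrib, hrev k] at h0
    calc ∑ i ∈ range (k+1), d i * d (k-i)
        = ⅟(2:R) * ((2:R) * ∑ i ∈ range (k+1), d i * d (k-i)) := by
          rw [invOf_mul_cancel_left]
      _ = 0 := by rw [two_mul, h0, mul_zero]
  set X := ∑ i ∈ range (n+2), d i * d (n+1-i) with hXdef
  -- key commutation: d 0 commutes with X
  have hcomm : d 0 * X = X * d 0 := by
    have lhs_eq : ∑ p ∈ range (n+2), d p * ∑ q ∈ range (n+2-p), d q * d (n+1-p-q)
        = d 0 * X := by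
      rw [Finset.sum_eq_single_of_mem 0 (Finset.mem_range.mpr (by omega))]
      · simp [hXdef]
      · intro p hp hp0
        simp only [Finset.mem_range] at hp
        have hz : ∑ q ∈ range (n+2-p), d q * d (n+1-p-q) = 0 := by
          have hr : n+2-p = (n+1-p)+1 := by omega
          rw [hr]
          exact hX (n+1-p) (by omega)
        rw [hz, mul_zero]
    have rhs_eq : ∑ r ∈ range (n+2), (∑ p ∈ range (n+2-r), d p * d (n+1-r-p)) * d r
        = X * d 0 := by
      rw [Finset.sum_eq_single_of_mem 0 (Finset.mem_range.mpr (by omega))]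
      · simp [hXdef]
      · intro r hr hr0
        simp only [Finset.mem_range] at hr
        have hz : ∑ p ∈ range (n+2-r), d p * d (n+1-r-p) = 0 := by
          have hq : n+2-r = (n+1-r)+1 := by omega
          rw [hq]
          exact hX (n+1-r) (by omega)
        rw [hz, zero_mul]
    have mid : ∑ p ∈ range (n+2), d p * ∑ q ∈ range (n+2-p), d q * d (n+1-p-q)
        = ∑ r ∈ range (n+2), (∑ p ∈ range (n+2-r), d p * d (n+1-r-p)) * d r := by
      simp_rw [Finset.mul_sum, Finset.sum_mul]
      rw [Finset.sum_sigma', Finset.sum_sigma']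
      refine Finset.sum_nbij' (fun x => ⟨n+1-x.1-x.2, x.1⟩) (fun x => ⟨x.2, n+1-x.1-x.2⟩)
        ?_ ?_ ?_ ?_ ?_
      · rintro ⟨p, q⟩ hx
        simp only [Finset.mem_sigma, Finset.mem_range] at hx ⊢
        omega
      · rintro ⟨r, p⟩ hx
        simp only [Finset.mem_sigma, Finset.mem_range] at hx ⊢
        omega
      · rintro ⟨p, q⟩ hx
        simp only [Finset.mem_sigma, Finset.mem_range] at hx
        have h1 : n+1-(n+1-p-q)-p = q := by omega
        simp [h1]
      · rintro ⟨r, p⟩ hx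
        simp only [Finset.mem_sigma, Finset.mem_range] at hx
        have h1 : n+1-p-(n+1-r-p) = r := by omega
        simp [h1]
      · rintro ⟨p, q⟩ hx
        simp only [Finset.mem_sigma, Finset.mem_range] at hx
        have h1 : n+1-(n+1-p-q)-p = q := by omega
        simp only [h1]
        rw [mul_assoc]
    rw [← lhs_eq, mid, rhs_eq]
  -- d 0 squares to zero
  have e0 : d 0 * d 0 = 0 := by
    have := hX 0 (Nat.zero_le n)
    simpa using this
  -- rewrite the goal as a commutator with the partial sum
  set A : ℕ → R := fun i => d i * d (n+1-i) + d (n+1-i) * d i with hA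
  have hsumA : ∑ i ∈ range (n+2), A i = X + X := by
    simp only [hA]
    rw [Finset.sum_add_distrib, hrev (n+1)]
  have hpeel : ∑ i ∈ range (n+2), A i = A (n+1) + (∑ i ∈ range n, A (i+1) + A 0) := by
    rw [Finset.sum_range_succ, Finset.sum_range_succ']
    abel
  have hIcc : ∑ i ∈ Finset.Icc 1 n, A i = ∑ i ∈ range n, A (i+1) := by
    rw [← Finset.Ico_add_one_right_eq_Icc, Finset.sum_Ico_eq_sum_range]
    simp [add_comm]
  have hS : ∑ i ∈ Finset.Icc 1 n, A i = X + X - A (n+1) - A 0 := by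
    have hp := hpeel
    rw [hsumA] at hp
    rw [hIcc, hp]
    abel
  have hA0 : A 0 = d 0 * d (n+1) + d (n+1) * d 0 := by simp [hA]
  have hA1 : A (n+1) = d (n+1) * d 0 + d 0 * d (n+1) := by simp [hA]
  have goal_eq : ∑ i ∈ Finset.Icc 1 n,
      (d 0 * (d i * d (n + 1 - i) + d (n + 1 - i) * d i)
        - (d i * d (n + 1 - i) + d (n + 1 - i) * d i) * d 0)
      = d 0 * (∑ i ∈ Finset.Icc 1 n, A i) - (∑ i ∈ Finset.Icc 1 n, A i) * d 0 := by
    rw [Finset.mul_sum, Finset.sum_mul, ← Finset.sum_sub_distrib]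
  rw [goal_eq, hS, hA0, hA1]
  have expand : d 0 * (X + X - (d (n+1) * d 0 + d 0 * d (n+1))
        - (d 0 * d (n+1) + d (n+1) * d 0))
      - (X + X - (d (n+1) * d 0 + d 0 * d (n+1))
        - (d 0 * d (n+1) + d (n+1) * d 0)) * d 0
      = (d 0 * X - X * d 0) + (d 0 * X - X * d 0)
        - ((d 0 * d 0) * d (n+1) - d (n+1) * (d 0 * d 0))
        - ((d 0 * d 0) * d (n+1) - d (n+1) * (d 0 * d 0)) := by noncomm_ring
  rw [expand, hcomm, e0]
  simp
end

section
/- Let M = ⊕_n M^n be a graded module over a ring, with endomorphisms d, d₀ of degree +1 satisfying d² = 0 and d₀² = 0, and h an endomorphism of degree −1. Set d₁ := d − d₀ and p₀ := id − h d₀ − d₀ h, and assume p₀ ∘ d₁ = 0. Then (id + h d₁) ∘ d = d₀ ∘ (id + h d₁). -/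
/-- **Homological perturbation identity.** Let `M = ⊕ₙ Mⁿ` be a graded module with
endomorphisms `d`, `d₀` of degree `+1` satisfying `d² = 0` and `d₀² = 0`, and `h` an
endomorphism of degree `−1`. With `d₁ := d − d₀` and `p₀ := 1 − h d₀ − d₀ h`, if
`p₀ ∘ d₁ = 0` then `(1 + h d₁) ∘ d = d₀ ∘ (1 + h d₁)`. -/
theorem stmt_4 {R M : Type*} [Ring R] [AddCommGroup M] [Module R M]
    (ℳ : ℤ → Submodule R M) (hM : DirectSum.IsInternal ℳ)
    (d d₀ h : Module.End R M)
    (hd : ∀ (i : ℤ), ∀ x ∈ ℳ i, d x ∈ ℳ (i + 1))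
    (hd₀ : ∀ (i : ℤ), ∀ x ∈ ℳ i, d₀ x ∈ ℳ (i + 1))
    (hh : ∀ (i : ℤ), ∀ x ∈ ℳ i, h x ∈ ℳ (i - 1))
    (hdd : d * d = 0) (hd₀d₀ : d₀ * d₀ = 0)
    (hp : (1 - h * d₀ - d₀ * h) * (d - d₀) = 0) :
    (1 + h * (d - d₀)) * d = d₀ * (1 + h * (d - d₀)) := by
  have key : (1 + h * (d - d₀)) * d - d₀ * (1 + h * (d - d₀)) =
      (1 - h * d₀ - d₀ * h) * (d - d₀) + h * (d * d) - h * (d₀ * d₀) := by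
    noncomm_ring
  have : (1 + h * (d - d₀)) * d - d₀ * (1 + h * (d - d₀)) = 0 := by
    rw [key, hp, hdd, hd₀d₀]; simp
  exact sub_eq_zero.mp this
end

section
/- Let R be an associative ring, L_n(R) the n-th lower central series term of R under the commutator bracket, F^d R the commutator filtration, and for n ≥ 1 let I_n(R) be the two-sided ideal generated by all products L_{i_1}(R)···L_{i_m}(R) (interspersed with ring elements) with each i_j ≥ 2 and i_1 + ... + i_m ≥ n. Then: (a) I_n(R) ⊆ F^{⌊n/2⌋} R; (b) F^{n−1} R ⊆ I_n(R) for all n ≥ 2. -/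
variable (R : Type*) [Ring R]

/-- `lcsR R n` is the `(n+1)`-st term `L_{n+1}(R)` of the lower central series of `R` viewed
as a Lie ring under the commutator: `lcsR R 0 = L₁(R) = R`,
`lcsR R (n+1) = L_{n+2}(R) = [R, L_{n+1}(R)]` (as an additive subgroup, i.e. `ℤ`-submodule). -/
def lcsR : ℕ → Submodule ℤ R
  | 0 => ⊤
  | n + 1 => Submodule.span ℤ {x : R | ∃ a : R, ∃ b ∈ lcsR n, x = a * b - b * a}

/-- For a list `[n₁, …, nₘ]` of positive integers, `chainR R [n₁, …, nₘ]` is the additive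
subgroup `R·L_{n₁}(R)·R·L_{n₂}(R)·⋯·L_{nₘ}(R)·R` of products of elements of the lower
central series terms interspersed with arbitrary ring elements. -/
def chainR : List ℕ → Submodule ℤ R
  | [] => ⊤
  | n :: t => ⊤ * lcsR R (n - 1) * chainR t


lemma lcsR_succ_le (n : ℕ) : lcsR R (n + 1) ≤ lcsR R n := by
  induction n with
  | zero => exact le_top
  | succ k ih =>
    show Submodule.span ℤ {x : R | ∃ a : R, ∃ b ∈ lcsR R (k+1), x = a * b - b * a} ≤ _
    rw [show lcsR R (k+1) = Submodule.span ℤ {x : R | ∃ a : R, ∃ b ∈ lcsR R k, x = a * b - b * a} from rfl]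
    apply Submodule.span_mono
    rintro x ⟨a, b, hb, rfl⟩
    exact ⟨a, b, ih hb, rfl⟩

lemma lcsR_antitone {m n : ℕ} (h : m ≤ n) : lcsR R n ≤ lcsR R m := by
  induction n with
  | zero => interval_cases m; exact le_rfl
  | succ k ih =>
    rcases Nat.lt_or_ge m (k+1) with h' | h'
    · exact (lcsR_succ_le R k).trans (ih (Nat.lt_succ_iff.mp h'))
    · have : m = k + 1 := le_antisymm h h'
      subst this; exact le_rfl

lemma top_mul_top : (⊤ : Submodule ℤ R) * ⊤ = ⊤ := by
  apply le_antisymm le_top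
  intro x _
  have := Submodule.mul_mem_mul (M := (⊤ : Submodule ℤ R)) (N := (⊤ : Submodule ℤ R))
    (m := x) (n := 1) trivial trivial
  simpa using this

lemma top_mul_chainR (t : List ℕ) : ⊤ * chainR R t = chainR R t := by
  cases t with
  | nil => show ⊤ * ⊤ = _; rw [top_mul_top]; rfl
  | cons m t =>
    show ⊤ * (⊤ * lcsR R (m-1) * chainR R t) = ⊤ * lcsR R (m-1) * chainR R t
    rw [← mul_assoc, ← mul_assoc, top_mul_top]

lemma chainR_one_cons (t : List ℕ) : chainR R (1 :: t) = chainR R t := by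
  show ⊤ * lcsR R (1-1) * chainR R t = _
  rw [show (1:ℕ)-1 = 0 from rfl, show lcsR R 0 = ⊤ from rfl, top_mul_top, top_mul_chainR]

lemma chainR_mono {ms ns : List ℕ} (h : List.Forall₂ (· ≤ ·) ms ns) :
    chainR R ns ≤ chainR R ms := by
  induction h with
  | nil => exact le_rfl
  | @cons m n ms ns hmn _ ih =>
    show ⊤ * lcsR R (n-1) * chainR R ns ≤ ⊤ * lcsR R (m-1) * chainR R ms
    exact mul_le_mul'
      (mul_le_mul' le_rfl (lcsR_antitone R (Nat.sub_le_sub_right hmn 1))) ih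

lemma exists_reduce (ns : List ℕ) (h1 : ∀ n ∈ ns, 1 ≤ n) (d : ℕ)
    (hd : d ≤ (ns.map (· - 1)).sum) :
    ∃ ms : List ℕ, List.Forall₂ (· ≤ ·) ms ns ∧ (∀ n ∈ ms, 1 ≤ n) ∧
      (ms.map (· - 1)).sum = d := by
  induction ns generalizing d with
  | nil =>
    simp only [List.map_nil, List.sum_nil, Nat.le_zero] at hd
    exact ⟨[], List.Forall₂.nil, by simp, by simp [hd]⟩
  | cons n t ih =>
    simp only [List.map_cons, List.sum_cons] at hd
    by_cases hc : d ≤ (t.map (· - 1)).sum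
    · obtain ⟨ms, hf, hm1, hsum⟩ := ih (fun x hx => h1 x (List.mem_cons_of_mem _ hx)) d hc
      refine ⟨1 :: ms, List.Forall₂.cons (h1 n (List.mem_cons_self)) hf, ?_, by simpa using hsum⟩
      intro x hx
      rcases List.mem_cons.mp hx with rfl | hx
      · exact le_rfl
      · exact hm1 x hx
    · push_neg at hc
      refine ⟨(d - (t.map (· - 1)).sum + 1) :: t, List.Forall₂.cons ?_ ?_, ?_, ?_⟩
      · have hn := h1 n (List.mem_cons_self); omega
      · exact List.forall₂_same.mpr fun x _ => le_rfl
      · intro x hx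
        rcases List.mem_cons.mp hx with rfl | hx
        · omega
        · exact h1 x (List.mem_cons_of_mem _ hx)
      · simp only [List.map_cons, List.sum_cons]; omega

lemma sum_le_two_mul (ns : List ℕ) (h : ∀ i ∈ ns, 2 ≤ i) :
    ns.sum ≤ 2 * (ns.map (· - 1)).sum := by
  induction ns with
  | nil => simp
  | cons n t ih =>
    simp only [List.sum_cons, List.map_cons]
    have h1 := h n (List.mem_cons_self)
    have h2 := ih (fun x hx => h x (List.mem_cons_of_mem _ hx))
    omega

lemma sum_eq_wsum_add_length (ns : List ℕ) (h : ∀ i ∈ ns, 1 ≤ i) :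
    ns.sum = (ns.map (· - 1)).sum + ns.length := by
  induction ns with
  | nil => simp
  | cons n t ih =>
    simp only [List.sum_cons, List.map_cons, List.length_cons]
    have h1 := h n (List.mem_cons_self)
    have h2 := ih (fun x hx => h x (List.mem_cons_of_mem _ hx))
    omega

lemma chainR_filter (ns : List ℕ) (h1 : ∀ n ∈ ns, 1 ≤ n) :
    chainR R ns = chainR R (ns.filter (fun i => 2 ≤ i)) ∧
    ((ns.filter (fun i => 2 ≤ i)).map (· - 1)).sum = (ns.map (· - 1)).sum := by
  induction ns with
  | nil => simp
  | cons n t ih =>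
    obtain ⟨ihc, ihs⟩ := ih (fun x hx => h1 x (List.mem_cons_of_mem _ hx))
    by_cases h2 : 2 ≤ n
    · rw [List.filter_cons_of_pos (by simpa using h2)]
      constructor
      · show ⊤ * lcsR R (n-1) * chainR R t = ⊤ * lcsR R (n-1) * chainR R (t.filter _)
        rw [ihc]
      · simp only [List.map_cons, List.sum_cons, ihs]
    · have hn1 : n = 1 := by have := h1 n (List.mem_cons_self); omega
      subst hn1
      rw [List.filter_cons_of_neg (by simp)]
      exact ⟨by rw [chainR_one_cons, ihc], by simpa using ihs⟩

/-- Kapranov's commutator filtration: `commF R d` is the two-sided ideal spanned by all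
products (interspersed with arbitrary ring elements) of elements of `L_{n₁}(R), …, L_{nₘ}(R)`
with `n₁ + ⋯ + nₘ − m = d`. -/
def commF (d : ℕ) : Submodule ℤ R :=
  ⨆ (ns : List ℕ) (_ : ∀ n ∈ ns, 1 ≤ n) (_ : (ns.map (· - 1)).sum = d), chainR R ns

/-- The I-filtration: `idealI R n` is the two-sided ideal generated by all products
(interspersed with ring elements) `L_{i₁}(R)⋯L_{iₘ}(R)` with each `iⱼ ≥ 2` and
`i₁ + ⋯ + iₘ ≥ n`. -/
def idealI (n : ℕ) : Submodule ℤ R :=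
  ⨆ (ns : List ℕ) (_ : ∀ i ∈ ns, 2 ≤ i) (_ : n ≤ ns.sum), chainR R ns

/-- **Comparison of the I-filtration and the commutator filtration:**
(a) `Iₙ(R) ⊆ F^{⌊n/2⌋} R` for `n ≥ 1`; (b) `F^{n−1} R ⊆ Iₙ(R)` for `n ≥ 2`. -/
theorem stmt_7 (n : ℕ) (hn : 1 ≤ n) :
    idealI R n ≤ commF R (n / 2) ∧ (2 ≤ n → commF R (n - 1) ≤ idealI R n) := by
  constructor
  · rw [idealI]
    apply iSup_le; intro ns; apply iSup_le; intro h2; apply iSup_le; intro hsum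
    have h1 : ∀ i ∈ ns, 1 ≤ i := fun i hi => le_trans one_le_two (h2 i hi)
    have hw : n / 2 ≤ (ns.map (· - 1)).sum := by
      have := sum_le_two_mul ns h2; omega
    obtain ⟨ms, hf, hm1, hms⟩ := exists_reduce ns h1 (n / 2) hw
    calc chainR R ns ≤ chainR R ms := chainR_mono R hf
      _ ≤ commF R (n / 2) :=
        le_iSup_of_le ms (le_iSup_of_le hm1 (le_iSup_of_le hms le_rfl))
  · intro h2n
    rw [commF]
    apply iSup_le; intro ns; apply iSup_le; intro h1; apply iSup_le; intro hsum
    obtain ⟨hc, hs⟩ := chainR_filter R ns h1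
    set ms := ns.filter (fun i => 2 ≤ i) with hms
    have hm2 : ∀ i ∈ ms, 2 ≤ i := fun i hi => by
      have := (List.mem_filter.mp hi).2; simpa using this
    have hmsum : (ms.map (· - 1)).sum = n - 1 := hs.trans hsum
    have hne : ms ≠ [] := by
      intro h; rw [h] at hmsum; simp at hmsum; omega
    have hlen : 1 ≤ ms.length := List.length_pos_iff.mpr hne
    have hms_sum : n ≤ ms.sum := by
      have := sum_eq_wsum_add_length ms (fun i hi => le_trans one_le_two (hm2 i hi))
      omega
    rw [hc]
    exact le_iSup_of_le ms (le_iSup_of_le hm2 (le_iSup_of_le hms_sum le_rfl))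
end

section
/- Let R be an associative ring and I_n(R) (n ≥ 1) the two-sided ideal generated by products L_{i_1}(R)···L_{i_m}(R) with all i_j ≥ 2 and i_1 + ... + i_m ≥ n, where L_i(R) is the i-th lower central series term of R as a Lie ring under commutator. Then [R, I_n(R)] ⊆ I_{n+1}(R); consequently, in the associated graded ring gr_I(R) = ⊕_n I_n(R)/I_{n+1}(R) (with I_0(R) = R), the degree-zero piece R/I_1(R) maps to the center. -/
variable (R : Type*) [Ring R]

section aux
variable {R}

/-- The commutator-with-`r` map, as a `ℤ`-linear map. -/
private def phiC (r : R) : R →ₗ[ℤ] R where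
  toFun x := r * x - x * r
  map_add' a b := by noncomm_ring
  map_smul' z a := by
    simp only [RingHom.id_apply, mul_smul_comm, smul_mul_assoc, smul_sub]

private lemma phiC_apply (r x : R) : phiC r x = r * x - x * r := rfl

private lemma leibniz (r : R) (M N : Submodule ℤ R) :
    (M * N).map (phiC r) ≤ M.map (phiC r) * N + M * N.map (phiC r) := by
  rw [Submodule.map_le_iff_le_comap]
  refine Submodule.mul_le.mpr fun m hm n hn => ?_
  simp only [Submodule.mem_comap, phiC_apply]
  have h : r * (m * n) - m * n * r = (r * m - m * r) * n + m * (r * n - n * r) := by noncomm_ring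
  rw [h]
  exact Submodule.add_mem _
    (Submodule.mem_sup_left (Submodule.mul_mem_mul (Submodule.mem_map_of_mem hm) hn))
    (Submodule.mem_sup_right (Submodule.mul_mem_mul hm (Submodule.mem_map_of_mem hn)))

private lemma phiC_lcs (r : R) (k : ℕ) :
    (lcsR R k).map (phiC r) ≤ lcsR R (k + 1) := by
  rw [Submodule.map_le_iff_le_comap]
  intro x hx
  exact Submodule.subset_span ⟨r, x, hx, rfl⟩

private lemma le_top_mul_top (M : Submodule ℤ R) : M ≤ ⊤ * M * ⊤ := by
  intro m hm
  have : (1 : R) * m * 1 ∈ ⊤ * M * ⊤ :=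
    Submodule.mul_mem_mul (Submodule.mul_mem_mul trivial hm) trivial
  simpa using this

private lemma le_top_mul (M : Submodule ℤ R) : M ≤ ⊤ * M := by
  intro m hm
  have : (1 : R) * m ∈ ⊤ * M := Submodule.mul_mem_mul trivial hm
  simpa using this

private lemma chain_le_idealI {ns : List ℕ} {n : ℕ} (h1 : ∀ i ∈ ns, 2 ≤ i)
    (h2 : n ≤ ns.sum) : chainR R ns ≤ idealI R n :=
  le_iSup_of_le ns (le_iSup_of_le h1 (le_iSup_of_le h2 le_rfl))

private lemma idealI_anti {m n : ℕ} (h : m ≤ n) : idealI R n ≤ idealI R m :=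
  iSup_le fun ns => iSup_le fun h1 => iSup_le fun h2 =>
    chain_le_idealI h1 (h.trans h2)

private lemma main (r : R) : ∀ ns : List ℕ, (∀ i ∈ ns, 2 ≤ i) →
    (chainR R ns).map (phiC r) ≤ idealI R (ns.sum + 1) := by
  intro ns
  induction ns with
  | nil =>
    intro _
    have h1 : (⊤ : Submodule ℤ R).map (phiC r) ≤ lcsR R 1 := phiC_lcs r 0
    refine (h1.trans (le_top_mul_top _)).trans ?_
    have : (⊤ : Submodule ℤ R) * lcsR R 1 * ⊤ = chainR R [2] := by
      simp [chainR]
    rw [this]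
    exact chain_le_idealI (by simp) (by simp [List.sum])
  | cons k t ih =>
    intro hall
    have hk : 2 ≤ k := hall k (by simp)
    have ht : ∀ i ∈ t, 2 ≤ i := fun i hi => hall i (List.mem_cons_of_mem _ hi)
    show ((⊤ * lcsR R (k - 1)) * chainR R t).map (phiC r) ≤ idealI R ((k :: t).sum + 1)
    have hL : lcsR R ((k + 1) - 1) = lcsR R (k - 1 + 1) := by
      congr 1; omega
    refine (leibniz r _ _).trans (sup_le ?_ ?_)
    · -- (map φ (⊤*L)) * C
      refine (mul_le_mul_left (leibniz r _ _) _).trans ?_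
      rw [Submodule.add_eq_sup, Submodule.sup_mul]
      refine sup_le ?_ ?_
      · -- (map φ ⊤ * L) * C ≤ chainR (2::k::t)
        calc (Submodule.map (phiC r) ⊤ * lcsR R (k - 1)) * chainR R t
            ≤ ((⊤ * lcsR R 1) * (⊤ * lcsR R (k - 1))) * chainR R t :=
              mul_le_mul_left
                (mul_le_mul' ((phiC_lcs r 0).trans (le_top_mul _)) (le_top_mul _)) _
          _ = (⊤ * lcsR R 1) * ((⊤ * lcsR R (k - 1)) * chainR R t) := mul_assoc _ _ _
          _ = chainR R (2 :: k :: t) := by simp [chainR]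
          _ ≤ idealI R ((k :: t).sum + 1) := chain_le_idealI
              (by intro i hi; simp at hi; rcases hi with rfl | rfl | hi
                  · norm_num
                  · exact hk
                  · exact ht _ hi)
              (by simp [List.sum_cons])
      · -- (⊤ * map φ L) * C ≤ chainR ((k+1)::t)
        calc (⊤ * Submodule.map (phiC r) (lcsR R (k - 1))) * chainR R t
            ≤ (⊤ * lcsR R ((k + 1) - 1)) * chainR R t := by
              rw [hL]
              exact mul_le_mul_left
                (mul_le_mul_right (phiC_lcs r (k - 1)) _) _
          _ = chainR R ((k + 1) :: t) := rfl
          _ ≤ idealI R ((k :: t).sum + 1) := chain_le_idealI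
              (by intro i hi; simp at hi; rcases hi with rfl | hi
                  · omega
                  · exact ht _ hi)
              (by simp [List.sum_cons])
    · -- (⊤*L) * (map φ C)
      refine (mul_le_mul_right (ih ht) _).trans ?_
      rw [idealI, Submodule.mul_iSup]
      refine iSup_le fun ms => ?_
      rw [Submodule.mul_iSup]
      refine iSup_le fun hms => ?_
      rw [Submodule.mul_iSup]
      refine iSup_le fun hsum => ?_
      calc (⊤ * lcsR R (k - 1)) * chainR R ms = chainR R (k :: ms) := rfl
        _ ≤ idealI R ((k :: t).sum + 1) := chain_le_idealI
            (by intro i hi; simp at hi; rcases hi with rfl | hi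
                · exact hk
                · exact hms _ hi)
            (by simp [List.sum_cons] at hsum ⊢; omega)

end aux

/-- **Centrality modulo the I-filtration:** `[R, Iₙ(R)] ⊆ I_{n+1}(R)` for all `n`.
(The case `n = 0`, where `I₀(R) = R`, says that the degree-zero piece `R/I₁(R)` of the
associated graded ring `gr_I(R)` maps to its center.) -/
theorem stmt_8 (n : ℕ) (r x : R) (hx : x ∈ idealI R n) :
    r * x - x * r ∈ idealI R (n + 1) := by
  have h : (idealI R n).map (phiC r) ≤ idealI R (n + 1) := by
    rw [Submodule.map_le_iff_le_comap]
    refine iSup_le fun ns => iSup_le fun h1 => iSup_le fun h2 => ?_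
    rw [← Submodule.map_le_iff_le_comap]
    exact (main r ns h1).trans (idealI_anti (by omega))
  exact h (Submodule.mem_map_of_mem hx)
end

section
/- Let k be a field of characteristic zero and consider the ring k[x][[y]] of formal power series in y with coefficients in the polynomial ring k[x]. Suppose f ∈ k[x][[y]] satisfies ∂f/∂x + ∂f/∂y = 0. Then there exists a polynomial g ∈ k[t] such that f(x, y) = g(y − x), i.e. f = ∑_n c_n (y − x)^n for finitely many c_n ∈ k; moreover g is uniquely determined by g(−x) = f(x, 0). -/
/-- The partial derivative `∂f/∂x` of `f ∈ k[x][[y]]`, computed coefficientwise. -/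
noncomputable def Dx {k : Type*} [Field k] (f : PowerSeries (Polynomial k)) :
    PowerSeries (Polynomial k) :=
  PowerSeries.mk fun n => Polynomial.derivative (PowerSeries.coeff (R := Polynomial k) n f)

/-- The partial derivative `∂f/∂y` of `f ∈ k[x][[y]]` in the power series variable. -/
noncomputable def Dy {k : Type*} [Field k] (f : PowerSeries (Polynomial k)) :
    PowerSeries (Polynomial k) :=
  PowerSeries.mk fun n => ((n : Polynomial k) + 1) * PowerSeries.coeff (R := Polynomial k) (n + 1) f

section aux
open PowerSeries Polynomial

variable {k : Type*} [Field k]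

lemma Dy_eq (f : PowerSeries (Polynomial k)) : Dy f = f.derivativeFun := by
  ext n
  simp [Dy, PowerSeries.derivativeFun, PowerSeries.coeff_derivativeFun]
  ring

lemma Dx_add (f g : PowerSeries (Polynomial k)) : Dx (f + g) = Dx f + Dx g := by
  ext n; simp [Dx]

lemma Dx_mul (f g : PowerSeries (Polynomial k)) :
    Dx (f * g) = Dx f * g + f * Dx g := by
  ext n
  simp [Dx, PowerSeries.coeff_mul, Polynomial.derivative_mul, Finset.sum_add_distrib]

lemma Dx_X : Dx (PowerSeries.X : PowerSeries (Polynomial k)) = 0 := by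
  ext n
  simp [Dx, PowerSeries.coeff_X]
  split <;> simp

lemma Dx_C (p : Polynomial k) :
    Dx (PowerSeries.C (R := Polynomial k) p) = PowerSeries.C (derivative p) := by
  ext n
  simp [Dx, PowerSeries.coeff_C]
  split <;> simp

lemma Dy_C (p : Polynomial k) : Dy (PowerSeries.C (R := Polynomial k) p) = 0 := by
  ext n
  simp [Dy, PowerSeries.coeff_C]

lemma D_u : Dx (PowerSeries.X - PowerSeries.C (R := Polynomial k) Polynomial.X)
    + Dy (PowerSeries.X - PowerSeries.C (R := Polynomial k) Polynomial.X) = 0 := by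
  have h1 : (PowerSeries.X - PowerSeries.C (R := Polynomial k) Polynomial.X)
      = PowerSeries.X + PowerSeries.C (R := Polynomial k) (-Polynomial.X) := by
    simp [sub_eq_add_neg]
  rw [h1, Dx_add, Dy_eq, Dx_X, Dx_C]
  rw [PowerSeries.derivativeFun_add]
  have h2 : (PowerSeries.X : PowerSeries (Polynomial k)).derivativeFun = 1 := by
    exact PowerSeries.derivative_X
  have h3 : (PowerSeries.C (R := Polynomial k) (-Polynomial.X)).derivativeFun = 0 := by
    rw [← Dy_eq, Dy_C]
  rw [h2, h3]
  simp

lemma D_mul (f g : PowerSeries (Polynomial k))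
    (hf : Dx f + Dy f = 0) (hg : Dx g + Dy g = 0) :
    Dx (f * g) + Dy (f * g) = 0 := by
  rw [Dx_mul, Dy_eq, PowerSeries.derivativeFun_mul]
  have h1 : Dx f * g + f * Dx g + (f * g.derivativeFun + g * f.derivativeFun)
      = (Dx f + Dy f) * g + f * (Dx g + Dy g) := by
    rw [Dy_eq, Dy_eq]; ring
  simp only [smul_eq_mul]
  rw [h1, hf, hg]
  simp

lemma D_pow (n : ℕ) :
    Dx ((PowerSeries.X - PowerSeries.C (R := Polynomial k) Polynomial.X) ^ n)
    + Dy ((PowerSeries.X - PowerSeries.C (R := Polynomial k) Polynomial.X) ^ n) = 0 := by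
  induction n with
  | zero =>
    simp only [pow_zero]
    have : (1 : PowerSeries (Polynomial k)) = PowerSeries.C 1 := by simp
    rw [this, Dx_C, Dy_C]
    simp
  | succ n ih =>
    rw [pow_succ]
    exact D_mul _ _ ih D_u

lemma D_aeval (g : Polynomial k) :
    Dx (Polynomial.aeval (PowerSeries.X - PowerSeries.C (R := Polynomial k) Polynomial.X) g)
    + Dy (Polynomial.aeval (PowerSeries.X - PowerSeries.C (R := Polynomial k) Polynomial.X) g)
    = 0 := by
  induction g using Polynomial.induction_on' with
  | add p q hp hq =>
    rw [map_add, Dx_add, Dy_eq, PowerSeries.derivativeFun_add, ← Dy_eq, ← Dy_eq]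
    have : Dx (Polynomial.aeval (PowerSeries.X - PowerSeries.C (R := Polynomial k) Polynomial.X) p)
        + Dx (Polynomial.aeval (PowerSeries.X - PowerSeries.C (R := Polynomial k) Polynomial.X) q)
        + (Dy (Polynomial.aeval (PowerSeries.X - PowerSeries.C (R := Polynomial k) Polynomial.X) p)
        + Dy (Polynomial.aeval (PowerSeries.X - PowerSeries.C (R := Polynomial k) Polynomial.X) q))
        = (Dx (Polynomial.aeval (PowerSeries.X - PowerSeries.C (R := Polynomial k) Polynomial.X) p)
        + Dy (Polynomial.aeval (PowerSeries.X - PowerSeries.C (R := Polynomial k) Polynomial.X) p))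
        + (Dx (Polynomial.aeval (PowerSeries.X - PowerSeries.C (R := Polynomial k) Polynomial.X) q)
        + Dy (Polynomial.aeval (PowerSeries.X - PowerSeries.C (R := Polynomial k) Polynomial.X) q)) := by
      ring
    rw [this, hp, hq, add_zero]
  | monomial n c =>
    rw [Polynomial.aeval_monomial]
    have halg : algebraMap k (PowerSeries (Polynomial k)) c
        = PowerSeries.C (R := Polynomial k) (Polynomial.C c) := by
      rw [PowerSeries.algebraMap_apply]; rfl
    have hC : Dx (PowerSeries.C (R := Polynomial k) (Polynomial.C c))
        + Dy (PowerSeries.C (R := Polynomial k) (Polynomial.C c)) = 0 := by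
      rw [Dx_C, Dy_C]; simp
    rw [halg]
    exact D_mul _ _ hC (D_pow n)

lemma eq_of_D {f g : PowerSeries (Polynomial k)} [CharZero k]
    (hf : Dx f + Dy f = 0) (hg : Dx g + Dy g = 0)
    (h0 : PowerSeries.constantCoeff (R := Polynomial k) f
        = PowerSeries.constantCoeff (R := Polynomial k) g) : f = g := by
  suffices h : ∀ n, PowerSeries.coeff (R := Polynomial k) n f = PowerSeries.coeff (R := Polynomial k) n g from
    PowerSeries.ext h
  intro n
  induction n with
  | zero => simpa [PowerSeries.coeff_zero_eq_constantCoeff] using h0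
  | succ n ih =>
    have hfn := congrArg (PowerSeries.coeff (R := Polynomial k) n) hf
    have hgn := congrArg (PowerSeries.coeff (R := Polynomial k) n) hg
    simp only [map_add, Dx, Dy, PowerSeries.coeff_mk, map_zero] at hfn hgn
    have hne : ((n : Polynomial k) + 1) ≠ 0 := by
      exact_mod_cast (Nat.cast_add_one_ne_zero n : ((n : ℕ) + 1 : Polynomial k) ≠ 0)
    apply mul_left_cancel₀ hne
    have e1 := eq_neg_of_add_eq_zero_right hfn
    have e2 := eq_neg_of_add_eq_zero_right hgn
    rw [e1, e2, ih]

lemma aeval_negX (g : Polynomial k) :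
    Polynomial.aeval (-(Polynomial.X : Polynomial k)) g = g.comp (-Polynomial.X) := by
  rw [Polynomial.comp, Polynomial.aeval_def, Polynomial.algebraMap_eq]

lemma comp_negX_comp_negX (g : Polynomial k) :
    (g.comp (-Polynomial.X)).comp (-Polynomial.X) = g := by
  rw [Polynomial.comp_assoc]
  simp

lemma constantCoeff_aeval_u (g : Polynomial k) :
    PowerSeries.constantCoeff (R := Polynomial k)
      (Polynomial.aeval (PowerSeries.X - PowerSeries.C (R := Polynomial k) Polynomial.X) g)
    = Polynomial.aeval (-(Polynomial.X : Polynomial k)) g := by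
  rw [Polynomial.aeval_def, Polynomial.aeval_def, Polynomial.hom_eval₂]
  have h1 : (PowerSeries.constantCoeff (R := Polynomial k)).comp
      (algebraMap k (PowerSeries (Polynomial k))) = algebraMap k (Polynomial k) := by
    ext c
    simp [PowerSeries.algebraMap_apply]
  have h2 : PowerSeries.constantCoeff (R := Polynomial k)
      (PowerSeries.X - PowerSeries.C (R := Polynomial k) Polynomial.X)
      = -(Polynomial.X : Polynomial k) := by
    simp
  rw [h1, h2]
end aux

/-- **Kernel of the total differential on `k[x][[y]]`.** Let `k` be a field of characteristic
zero and `f ∈ k[x][[y]]` with `∂f/∂x + ∂f/∂y = 0`. Then there is a unique polynomial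
`g ∈ k[t]` with `f = g(y − x)`; moreover any such `g` satisfies `g(−x) = f(x, 0)` (the
constant coefficient of `f`), which determines it. -/
theorem stmt_16 {k : Type*} [Field k] [CharZero k]
    (f : PowerSeries (Polynomial k)) (hf : Dx f + Dy f = 0) :
    (∃! g : Polynomial k,
        Polynomial.aeval
          (PowerSeries.X - PowerSeries.C (R := Polynomial k) Polynomial.X) g = f) ∧
    (∀ g : Polynomial k,
        Polynomial.aeval
          (PowerSeries.X - PowerSeries.C (R := Polynomial k) Polynomial.X) g = f →
        Polynomial.aeval (-(Polynomial.X : Polynomial k)) g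
          = PowerSeries.constantCoeff (R := Polynomial k) f) := by
  have hsecond : ∀ g : Polynomial k,
      Polynomial.aeval
        (PowerSeries.X - PowerSeries.C (R := Polynomial k) Polynomial.X) g = f →
      Polynomial.aeval (-(Polynomial.X : Polynomial k)) g
        = PowerSeries.constantCoeff (R := Polynomial k) f := by
    intro g hg
    rw [← hg, constantCoeff_aeval_u]
  refine ⟨?_, hsecond⟩
  set a0 := PowerSeries.constantCoeff (R := Polynomial k) f with ha0
  refine ⟨a0.comp (-Polynomial.X), ?_, ?_⟩
  · apply eq_of_D (D_aeval _) hf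
    rw [constantCoeff_aeval_u, aeval_negX, comp_negX_comp_negX]
  · intro g' hg'
    have h1 := hsecond g' hg'
    have h2 : Polynomial.aeval (-(Polynomial.X : Polynomial k)) (a0.comp (-Polynomial.X))
        = a0 := by rw [aeval_negX, comp_negX_comp_negX]
    rw [aeval_negX] at h1
    have h3 : g'.comp (-Polynomial.X) = (a0.comp (-Polynomial.X)).comp (-Polynomial.X) := by
      rw [comp_negX_comp_negX, h1]
    have := congrArg (fun p => p.comp (-(Polynomial.X : Polynomial k))) h3
    simpa [comp_negX_comp_negX] using this
end
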